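/- For every t ≥ 2 and l ≥ 1, there exists an alphabet Σ, a family of t strings of length 2l+3 over Σ, and an optimal length-l closest substring v_opt of cost 0, such that every length-(l+1) substring extension of the occurrences of v_opt has cost at least t, while the optimal length-(l+1) closest substring has cost 1. -/
import Mathlib


/-- The minimum Hamming distance between a pattern `v` of length `m` and the
length-`m` substrings of a string `Si` of length `n`. -/
def substrDist {α : Type} [DecidableEq α] {n : ℕ} (m : ℕ) (hm : m ≤ n)
    (Si : Fin n → α) (v : Fin m → α) : ℕ :=
  Finset.inf' (Finset.univ : Finset (Fin (n - m + 1)))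
    ⟨⟨0, Nat.succ_pos _⟩, Finset.mem_univ _⟩
    (fun q => hammingDist v (fun j => Si ⟨q.val + j.val, by
      have h1 := q.2; have h2 := j.2; omega⟩))

/-- The cost of a length-`m` pattern `v` against a family `S` of `t` strings of
length `n`: the sum over the family of the minimum Hamming distance to a
length-`m` substring. -/
def cost {α : Type} [DecidableEq α] {t n : ℕ} (m : ℕ) (hm : m ≤ n)
    (S : Fin t → Fin n → α) (v : Fin m → α) : ℕ :=
  ∑ i : Fin t, substrDist m hm (S i) v

/-! ### Auxiliary definitions and lemmas for hard_instance_exists -/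

/-- The hard instance strings, as a function of the string index `i` and
position `x` (both natural numbers).  Letters: `0 = A`, `1 = B`, `2 = C`,
`3 = D`, `4 + i = αᵢ`.  The closest substring is the alternating word
`CDCD⋯` of length `l`. -/
def str (l i x : ℕ) : ℕ :=
  if i = 0 then
    -- S₀ = vopt ⬝ α₀ ⬝ A ⬝ Bˡ ⬝ α₀
    if x < l then (if x % 2 = 0 then 2 else 3)
    else if x = l then 4
    else if x = l + 1 then 0
    else if x = 2 * l + 2 then 4
    else 1
  else if i = 1 then
    -- S₁ = B^(l+1) ⬝ A ⬝ α₁ ⬝ vopt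
    if x < l + 1 then 1
    else if x = l + 1 then 0
    else if x = l + 2 then 5
    else if (x - (l + 3)) % 2 = 0 then 2 else 3
  else
    -- Sᵢ = αᵢ ⬝ vopt ⬝ αᵢ ⬝ B^(l+1)
    if x = 0 then 4 + i
    else if x < l + 1 then (if (x - 1) % 2 = 0 then 2 else 3)
    else if x = l + 1 then 4 + i
    else 1

lemma substrDist_le_of_window {n m : ℕ} (hm : m ≤ n) (Si : Fin n → ℕ) (v : Fin m → ℕ)
    (qv : ℕ) (hqv : qv < n - m + 1) :
    substrDist m hm Si v ≤
      hammingDist v (fun j : Fin m => Si ⟨qv + j.val, by have := j.2; omega⟩) :=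
  Finset.inf'_le _ (Finset.mem_univ (⟨qv, hqv⟩ : Fin (n - m + 1)))

lemma substrDist_eq_zero_of_window {n m : ℕ} (hm : m ≤ n) (Si : Fin n → ℕ) (v : Fin m → ℕ)
    (qv : ℕ) (hqv : qv < n - m + 1)
    (hv : ∀ j : Fin m, v j = Si ⟨qv + j.val, by have := j.2; omega⟩) :
    substrDist m hm Si v = 0 := by
  apply Nat.le_zero.mp
  refine le_trans (substrDist_le_of_window hm Si v qv hqv) ?_
  exact le_of_eq (hammingDist_eq_zero.mpr (funext hv))

lemma le_substrDist {n m : ℕ} (hm : m ≤ n) (Si : Fin n → ℕ) (v : Fin m → ℕ)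
    (h : ∀ qv : ℕ, (hqv : qv < n - m + 1) →
      ∃ j : Fin m, v j ≠ Si ⟨qv + j.val, by have := j.2; omega⟩) :
    1 ≤ substrDist m hm Si v := by
  unfold substrDist
  apply Finset.le_inf'
  intro q _
  obtain ⟨j, hj⟩ := h q.val q.2
  refine Nat.pos_of_ne_zero (fun h0 => ?_)
  exact hj (congrFun (eq_of_hammingDist_eq_zero h0) j)

lemma substrDist_zero_extract {n m : ℕ} (hm : m ≤ n) (Si : Fin n → ℕ) (v : Fin m → ℕ)
    (h : substrDist m hm Si v = 0) :
    ∃ qv : ℕ, ∃ (hqv : qv < n - m + 1),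
      ∀ j : ℕ, (hj : j < m) → v ⟨j, hj⟩ = Si ⟨qv + j, by omega⟩ := by
  obtain ⟨q, -, hq⟩ := Finset.exists_mem_eq_inf'
    (s := (Finset.univ : Finset (Fin (n - m + 1))))
    ⟨⟨0, Nat.succ_pos _⟩, Finset.mem_univ _⟩
    (fun q : Fin (n - m + 1) => hammingDist v (fun j : Fin m =>
      Si ⟨q.val + j.val, by have := q.2; have := j.2; omega⟩))
  have hzero : hammingDist v (fun j : Fin m =>
      Si ⟨q.val + j.val, by have := q.2; have := j.2; omega⟩) = 0 := by
    rw [← hq]; exact h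
  have heq := eq_of_hammingDist_eq_zero hzero
  refine ⟨q.val, q.2, ?_⟩
  intro j hj
  exact congrFun heq ⟨j, hj⟩

lemma two_point_le_hammingDist {n : ℕ} (v y : Fin n → ℕ) (j0 j1 : Fin n) (hne : j0 ≠ j1) :
    ((if v j0 = y j0 then 0 else 1) + (if v j1 = y j1 then 0 else 1)) ≤ hammingDist v y := by
  unfold hammingDist
  by_cases h0 : v j0 = y j0
  · by_cases h1 : v j1 = y j1
    · rw [if_pos h0, if_pos h1]
      exact Nat.zero_le _
    · rw [if_pos h0, if_neg h1]
      have hmem : j1 ∈ Finset.filter (fun i => v i ≠ y i) Finset.univ :=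
        Finset.mem_filter.mpr ⟨Finset.mem_univ _, h1⟩
      have := Finset.card_pos.mpr ⟨j1, hmem⟩
      omega
  · by_cases h1 : v j1 = y j1
    · rw [if_neg h0, if_pos h1]
      have hmem : j0 ∈ Finset.filter (fun i => v i ≠ y i) Finset.univ :=
        Finset.mem_filter.mpr ⟨Finset.mem_univ _, h0⟩
      have := Finset.card_pos.mpr ⟨j0, hmem⟩
      omega
    · rw [if_neg h0, if_neg h1]
      have hsub : ({j0, j1} : Finset (Fin n)) ⊆
          Finset.filter (fun i => v i ≠ y i) Finset.univ := by
        intro x hx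
        simp only [Finset.mem_insert, Finset.mem_singleton] at hx
        rcases hx with rfl | rfl
        · exact Finset.mem_filter.mpr ⟨Finset.mem_univ _, h0⟩
        · exact Finset.mem_filter.mpr ⟨Finset.mem_univ _, h1⟩
      have hcard := Finset.card_le_card hsub
      rw [Finset.card_insert_of_notMem (by simpa using hne), Finset.card_singleton] at hcard
      omega

lemma sum_ite_card {t : ℕ} (P : Fin t → Prop) [DecidablePred P] :
    (∑ i : Fin t, if P i then 0 else 1) + (Finset.filter P Finset.univ).card = t := by
  classical
  have h1 : (∑ i : Fin t, if P i then 0 else 1) =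
      (Finset.filter (fun i => ¬ P i) Finset.univ).card := by
    rw [Finset.card_eq_sum_ones, Finset.sum_filter]
    apply Finset.sum_congr rfl
    intro i _
    by_cases h : P i <;> simp [h]
  rw [h1]
  have h2 := Finset.card_filter_add_card_filter_not
    (s := (Finset.univ : Finset (Fin t))) (p := P)
  simp only [Finset.card_univ, Fintype.card_fin] at h2
  omega

lemma counting {t : ℕ} (ht : 2 ≤ t) (y0 yl : Fin t → ℕ) (u w : ℕ)
    (hspec : ∀ i : Fin t, (y0 i = 2 ∧ yl i = 4 + i.val) ∨ (y0 i = 4 + i.val ∧ yl i < 4))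
    (h0 : ∀ i : Fin t, i.val = 0 → y0 i = 2)
    (h1 : ∀ i : Fin t, i.val = 1 → y0 i = 4 + i.val) :
    t ≤ ∑ i : Fin t, ((if u = y0 i then 0 else 1) + (if w = yl i then 0 else 1)) := by
  classical
  have e0 : (∑ i : Fin t, if u = y0 i then 0 else 1) +
      (Finset.filter (fun i : Fin t => u = y0 i) Finset.univ).card = t :=
    sum_ite_card _
  have el : (∑ i : Fin t, if w = yl i then 0 else 1) +
      (Finset.filter (fun i : Fin t => w = yl i) Finset.univ).card = t :=
    sum_ite_card _
  set M0 := Finset.filter (fun i : Fin t => u = y0 i) Finset.univ with hM0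
  set Ml := Finset.filter (fun i : Fin t => w = yl i) Finset.univ with hMl
  set Rt := Finset.filter (fun i : Fin t => y0 i = 2 ∧ yl i = 4 + i.val) Finset.univ with hRt
  set Lw := Finset.filter (fun i : Fin t => y0 i = 4 + i.val ∧ yl i < 4) Finset.univ with hLw
  have hRtLw : Rt.card + Lw.card = t := by
    rw [← Finset.card_union_of_disjoint (by
      rw [Finset.disjoint_left]
      intro i hi hi'
      rw [hRt, Finset.mem_filter] at hi
      rw [hLw, Finset.mem_filter] at hi'
      omega)]
    have huniv : Rt ∪ Lw = Finset.univ := Finset.eq_univ_of_forall (fun i => by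
      rcases hspec i with h | h
      · exact Finset.mem_union_left _ (Finset.mem_filter.mpr ⟨Finset.mem_univ _, h⟩)
      · exact Finset.mem_union_right _ (Finset.mem_filter.mpr ⟨Finset.mem_univ _, h⟩))
    rw [huniv, Finset.card_univ, Fintype.card_fin]
  have hb : 1 ≤ Rt.card := by
    obtain ⟨i0, hi0v⟩ : ∃ i0 : Fin t, i0.val = 0 := ⟨⟨0, by omega⟩, rfl⟩
    have hmem : i0 ∈ Rt := by
      rcases hspec i0 with h | h
      · exact Finset.mem_filter.mpr ⟨Finset.mem_univ _, h⟩
      · exfalso; have := h0 i0 hi0v; omega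
    exact Finset.card_pos.mpr ⟨i0, hmem⟩
  have ha : 1 ≤ Lw.card := by
    obtain ⟨i1, hi1v⟩ : ∃ i1 : Fin t, i1.val = 1 := ⟨⟨1, by omega⟩, rfl⟩
    have hmem : i1 ∈ Lw := by
      rcases hspec i1 with h | h
      · exfalso; have := h1 i1 hi1v; omega
      · exact Finset.mem_filter.mpr ⟨Finset.mem_univ _, h⟩
    exact Finset.card_pos.mpr ⟨i1, hmem⟩
  have key : M0.card + Ml.card ≤ t := by
    by_cases hu : u = 2
    · have hM0R : M0 ⊆ Rt := by
        intro i hi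
        rw [hM0, Finset.mem_filter] at hi
        rcases hspec i with h | h
        · exact Finset.mem_filter.mpr ⟨Finset.mem_univ _, h⟩
        · exfalso; have := hi.2; omega
      by_cases hw : w < 4
      · have hMlL : Ml ⊆ Lw := by
          intro i hi
          rw [hMl, Finset.mem_filter] at hi
          rcases hspec i with h | h
          · exfalso; have := hi.2; omega
          · exact Finset.mem_filter.mpr ⟨Finset.mem_univ _, h⟩
        have := Finset.card_le_card hM0R
        have := Finset.card_le_card hMlL
        omega
      · have hMl1 : Ml.card ≤ 1 := by
          apply Finset.card_le_one.mpr
          intro a ha' b hb'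
          rw [hMl, Finset.mem_filter] at ha' hb'
          have hha : a.val + 4 = w := by
            have := ha'.2; rcases hspec a with h | h <;> omega
          have hhb : b.val + 4 = w := by
            have := hb'.2; rcases hspec b with h | h <;> omega
          exact Fin.ext (by omega)
        have := Finset.card_le_card hM0R
        omega
    · have hM01 : M0.card ≤ 1 := by
        apply Finset.card_le_one.mpr
        intro a ha' b hb'
        rw [hM0, Finset.mem_filter] at ha' hb'
        have hha : a.val + 4 = u := by
          have := ha'.2; rcases hspec a with h | h <;> omega
        have hhb : b.val + 4 = u := by
          have := hb'.2; rcases hspec b with h | h <;> omega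
        exact Fin.ext (by omega)
      by_cases hw : w < 4
      · have hMlL : Ml ⊆ Lw := by
          intro i hi
          rw [hMl, Finset.mem_filter] at hi
          rcases hspec i with h | h
          · exfalso; have := hi.2; omega
          · exact Finset.mem_filter.mpr ⟨Finset.mem_univ _, h⟩
        have := Finset.card_le_card hMlL
        omega
      · have hMl1 : Ml.card ≤ 1 := by
          apply Finset.card_le_one.mpr
          intro a ha' b hb'
          rw [hMl, Finset.mem_filter] at ha' hb'
          have hha : a.val + 4 = w := by
            have := ha'.2; rcases hspec a with h | h <;> omega
          have hhb : b.val + 4 = w := by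
            have := hb'.2; rcases hspec b with h | h <;> omega
          exact Fin.ext (by omega)
        omega
  rw [Finset.sum_add_distrib]
  omega

set_option maxHeartbeats 1000000 in
lemma extension_spec (t l : ℕ) (ht : 2 ≤ t) (hl : 1 ≤ l) (i : Fin t)
    (q p : ℕ) (hq : q + (l + 1) ≤ 2 * l + 3) (hp : p + l ≤ 2 * l + 3)
    (hqp : q ≤ p) (hpq : p ≤ q + 1)
    (hocc : ∀ j : ℕ, (hj : j < l) → str l i.val (p + j) = (if j % 2 = 0 then 2 else 3))
    (y : Fin (l + 1) → ℕ)
    (hy : ∀ j : ℕ, (hj : j < l + 1) → y ⟨j, hj⟩ = str l i.val (q + j)) :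
    ((y ⟨0, by omega⟩ = 2 ∧ y ⟨l, by omega⟩ = 4 + i.val) ∧ i.val ≠ 1) ∨
    ((y ⟨0, by omega⟩ = 4 + i.val ∧ y ⟨l, by omega⟩ < 4) ∧ i.val ≠ 0) := by
  have h2 : str l i.val (p + 0) = 2 := by
    have h := hocc 0 hl
    simpa using h
  rcases Nat.lt_or_ge i.val 2 with hi | hi
  · by_cases hi0 : i.val = 0
    · have hpl : p < l := by
        unfold str at h2; split_ifs at h2 <;> omega
      have hp0 : p = 0 := by
        by_contra hne
        have h3 := hocc (l - p) (by omega)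
        have hpe : p + (l - p) = l := by omega
        rw [hpe] at h3
        unfold str at h3; split_ifs at h3 <;> omega
      have hq0 : q = 0 := by omega
      left
      refine ⟨⟨?_, ?_⟩, by omega⟩
      · rw [hy 0 (by omega)]
        unfold str; split_ifs <;> omega
      · rw [hy l (by omega)]
        unfold str; split_ifs <;> omega
    · have hi1 : i.val = 1 := by omega
      have hpe : p = l + 3 := by
        unfold str at h2; split_ifs at h2 <;> omega
      have hqe : q = l + 2 := by omega
      right
      refine ⟨⟨?_, ?_⟩, by omega⟩
      · rw [hy 0 (by omega)]
        unfold str; split_ifs <;> omega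
      · rw [hy l (by omega)]
        unfold str; split_ifs <;> omega
  · have hi0 : i.val ≠ 0 := by omega
    have hi1 : i.val ≠ 1 := by omega
    have hplt : p < l + 1 := by
      unfold str at h2; split_ifs at h2 <;> omega
    have hp1 : 1 ≤ p := by
      unfold str at h2; split_ifs at h2 <;> omega
    have hpe : p = 1 := by
      by_contra hne
      have h3 := hocc (l + 1 - p) (by omega)
      have hx : p + (l + 1 - p) = l + 1 := by omega
      rw [hx] at h3
      unfold str at h3; split_ifs at h3 <;> omega
    by_cases hq0 : q = 0
    · right
      refine ⟨⟨?_, ?_⟩, hi0⟩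
      · rw [hy 0 (by omega)]
        unfold str; split_ifs <;> omega
      · rw [hy l (by omega)]
        unfold str; split_ifs <;> omega
    · have hq1 : q = 1 := by omega
      left
      refine ⟨⟨?_, ?_⟩, hi1⟩
      · rw [hy 0 (by omega)]
        unfold str; split_ifs <;> omega
      · rw [hy l (by omega)]
        unfold str; split_ifs <;> omega

set_option maxHeartbeats 2000000 in
theorem hard_instance_exists (t l : ℕ) (ht : 2 ≤ t) (hl : 1 ≤ l) :
    ∃ (α : Type) (_ : DecidableEq α) (S : Fin t → Fin (2 * l + 3) → α)
      (vopt : Fin l → α),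
      -- `vopt` is an optimal length-`l` closest substring of cost 0
      cost l (by omega) S vopt = 0 ∧
      -- every family of length-(l+1) substring extensions of the occurrences
      -- of `vopt` has cost at least `t`
      (∀ y' : Fin t → Fin (l + 1) → α,
        (∀ i, ∃ (q p : ℕ) (hq : q + (l + 1) ≤ 2 * l + 3)
            (hp : p + l ≤ 2 * l + 3),
          q ≤ p ∧ p ≤ q + 1 ∧
          (∀ j : Fin l, S i ⟨p + j.val, by have := j.2; omega⟩ = vopt j) ∧
          (∀ j : Fin (l + 1), y' i j = S i ⟨q + j.val, by have := j.2; omega⟩)) →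
        ∀ v' : Fin (l + 1) → α, t ≤ ∑ i : Fin t, hammingDist v' (y' i)) ∧
      -- the optimal length-(l+1) closest substring has cost 1
      (∃ w : Fin (l + 1) → α, cost (l + 1) (by omega) S w = 1) ∧
      (∀ w : Fin (l + 1) → α, 1 ≤ cost (l + 1) (by omega) S w) := by
  refine ⟨ℕ, inferInstance, (fun i x => str l i.val x.val),
    (fun j => if j.val % 2 = 0 then 2 else 3), ?_, ?_, ?_, ?_⟩
  · -- cost of vopt is 0
    unfold cost
    apply Finset.sum_eq_zero
    intro i _
    rcases Nat.lt_or_ge i.val 2 with hi | hi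
    · by_cases hi0 : i.val = 0
      · apply substrDist_eq_zero_of_window _ _ _ 0 (by omega)
        intro j
        obtain ⟨j, hj⟩ := j
        show (if j % 2 = 0 then 2 else 3) = str l i.val (0 + j)
        unfold str; split_ifs <;> omega
      · have hi1 : i.val = 1 := by omega
        apply substrDist_eq_zero_of_window _ _ _ (l + 3) (by omega)
        intro j
        obtain ⟨j, hj⟩ := j
        show (if j % 2 = 0 then 2 else 3) = str l i.val (l + 3 + j)
        unfold str; split_ifs <;> omega
    · apply substrDist_eq_zero_of_window _ _ _ 1 (by omega)
      intro j
      obtain ⟨j, hj⟩ := j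
      show (if j % 2 = 0 then 2 else 3) = str l i.val (1 + j)
      unfold str; split_ifs <;> omega
  · -- every extension family has cost at least t
    intro y' hy' v'
    have spec : ∀ i : Fin t,
        ((y' i ⟨0, by omega⟩ = 2 ∧ y' i ⟨l, by omega⟩ = 4 + i.val) ∧ i.val ≠ 1) ∨
        ((y' i ⟨0, by omega⟩ = 4 + i.val ∧ y' i ⟨l, by omega⟩ < 4) ∧ i.val ≠ 0) := by
      intro i
      obtain ⟨q, p, hq, hp, hqp, hpq, hocc, hy⟩ := hy' i
      exact extension_spec t l ht hl i q p hq hp hqp hpq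
        (fun j hj => hocc ⟨j, hj⟩) (y' i) (fun j hj => hy ⟨j, hj⟩)
    have step1 : t ≤ ∑ i : Fin t,
        ((if v' ⟨0, by omega⟩ = y' i ⟨0, by omega⟩ then 0 else 1) +
         (if v' ⟨l, by omega⟩ = y' i ⟨l, by omega⟩ then 0 else 1)) := by
      refine counting ht (fun i => y' i ⟨0, by omega⟩) (fun i => y' i ⟨l, by omega⟩)
        (v' ⟨0, by omega⟩) (v' ⟨l, by omega⟩) ?_ ?_ ?_
      · intro i
        rcases spec i with ⟨h, _⟩ | ⟨h, _⟩
        · exact Or.inl h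
        · exact Or.inr h
      · intro i hi
        rcases spec i with ⟨h, _⟩ | ⟨h, hne⟩
        · exact h.1
        · exact absurd hi hne
      · intro i hi
        rcases spec i with ⟨h, hne⟩ | ⟨h, _⟩
        · exact absurd hi hne
        · exact h.1
    refine le_trans step1 (Finset.sum_le_sum ?_)
    intro i _
    refine two_point_le_hammingDist v' (y' i) ⟨0, by omega⟩ ⟨l, by omega⟩ ?_
    intro hz
    have hvv : (0 : ℕ) = l := congrArg Fin.val hz
    omega
  · -- the word B^(l+1) has cost 1
    refine ⟨fun _ => 1, ?_⟩
    unfold cost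
    obtain ⟨i0, hi0v⟩ : ∃ i : Fin t, i.val = 0 := ⟨⟨0, by omega⟩, rfl⟩
    have hside : ∀ b ∈ (Finset.univ : Finset (Fin t)), b ≠ i0 →
        substrDist (n := 2 * l + 3) (l + 1) (by omega) ((fun i x => str l i.val x.val) b)
          (fun _ => 1) = 0 := by
      intro b _ hbne
      have hb0 : b.val ≠ 0 := fun h => hbne (Fin.ext (h.trans hi0v.symm))
      by_cases hb1 : b.val = 1
      · apply substrDist_eq_zero_of_window _ _ _ 0 (by omega)
        intro j
        obtain ⟨j, hj⟩ := j
        show (1 : ℕ) = str l b.val (0 + j)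
        unfold str; split_ifs <;> omega
      · apply substrDist_eq_zero_of_window _ _ _ (l + 2) (by omega)
        intro j
        obtain ⟨j, hj⟩ := j
        show (1 : ℕ) = str l b.val (l + 2 + j)
        unfold str; split_ifs <;> omega
    rw [Finset.sum_eq_single_of_mem i0 (Finset.mem_univ _) hside]
    apply le_antisymm
    · refine le_trans (substrDist_le_of_window _ _ _ (l + 2) (by omega)) ?_
      unfold hammingDist
      apply Finset.card_le_one.mpr
      intro a ha b hb
      simp only [Finset.mem_filter] at ha hb
      have hav : a.val = l := by
        by_contra hne
        apply ha.2
        show (1 : ℕ) = str l i0.val (l + 2 + a.val)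
        have := a.2
        unfold str; split_ifs <;> omega
      have hbv : b.val = l := by
        by_contra hne
        apply hb.2
        show (1 : ℕ) = str l i0.val (l + 2 + b.val)
        have := b.2
        unfold str; split_ifs <;> omega
      exact Fin.ext (hav.trans hbv.symm)
    · apply le_substrDist
      intro qv hqv
      by_cases hqle : qv ≤ l + 1
      · refine ⟨⟨0, by omega⟩, ?_⟩
        show (1 : ℕ) ≠ str l i0.val (qv + 0)
        unfold str; split_ifs <;> omega
      · refine ⟨⟨l, by omega⟩, ?_⟩
        show (1 : ℕ) ≠ str l i0.val (qv + l)
        have hqe : qv = l + 2 := by omega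
        unfold str; split_ifs <;> omega
  · -- every length-(l+1) word has cost at least 1
    intro w
    by_contra hcon
    have hz : cost (l + 1) (by omega) (fun (i : Fin t) (x : Fin (2 * l + 3)) =>
        str l i.val x.val) w = 0 := by omega
    unfold cost at hz
    rw [Finset.sum_eq_zero_iff] at hz
    obtain ⟨i0, hi0v⟩ : ∃ i : Fin t, i.val = 0 := ⟨⟨0, by omega⟩, rfl⟩
    obtain ⟨i1, hi1v⟩ : ∃ i : Fin t, i.val = 1 := ⟨⟨1, by omega⟩, rfl⟩
    obtain ⟨q0, hq0, hw0⟩ := substrDist_zero_extract _ _ _ (hz i0 (Finset.mem_univ _))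
    obtain ⟨q1, hq1, hw1⟩ := substrDist_zero_extract _ _ _ (hz i1 (Finset.mem_univ _))
    have hw0' : ∀ j : ℕ, (hj : j < l + 1) → w ⟨j, hj⟩ = str l i0.val (q0 + j) :=
      fun j hj => hw0 j hj
    have hw1' : ∀ j : ℕ, (hj : j < l + 1) → w ⟨j, hj⟩ = str l i1.val (q1 + j) :=
      fun j hj => hw1 j hj
    by_cases hcase : q1 ≤ 1
    · have hx : str l i1.val (q1 + 0) = 1 := by
        unfold str; split_ifs <;> omega
      have ha : str l i0.val (q0 + 0) = 1 := by
        have h1' := hw1' 0 (by omega)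
        have h0' := hw0' 0 (by omega)
        rw [h0'] at h1'
        rw [h1', hx]
      have hq0e : q0 = l + 2 := by
        unfold str at ha; split_ifs at ha <;> omega
      have hc : w ⟨l, by omega⟩ ≤ 1 := by
        rw [hw1' l (by omega)]
        unfold str; split_ifs <;> omega
      have hb : w ⟨l, by omega⟩ = 4 := by
        rw [hw0' l (by omega)]
        unfold str; split_ifs <;> omega
      rw [hb] at hc
      omega
    · have h5 : w ⟨l + 2 - q1, by omega⟩ = 5 := by
        rw [hw1' (l + 2 - q1) (by omega)]
        have he : q1 + (l + 2 - q1) = l + 2 := by omega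
        rw [he]
        unfold str; split_ifs <;> omega
      have h4 : w ⟨l + 2 - q1, by omega⟩ = str l i0.val (q0 + (l + 2 - q1)) :=
        hw0' _ (by omega)
      rw [h5] at h4
      unfold str at h4
      split_ifs at h4 <;> omega
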